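/- Let P^{U0}_2 denote the distribution on X_2 that assigns probability 0 to the symbol 0 and probability 1/(r_2−1) to each nonzero symbol. For the product input distribution P(x_1,x_2) = 1{x_1 = 0}·P^{U0}_2(x_2), the rate pair R*_4 is attained: I_P(X_1;Y_2|X_2) = 0 and I_P(X_2;Y_1|X_1) = C_{2,0}. -/

import Mathlib

open Real BigOperators Finset

/-- Entropy of a finite probability vector, with the convention `0 * log 0 = 0`
(automatic since `Real.log 0 = 0`). -/
noncomputable def ent {n : ℕ} (p : Fin n → ℝ) : ℝ := -∑ y, p y * Real.log (p y)

/-- `Q` is a probability distribution on `Fin n`. -/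
def IsProbDist {n : ℕ} (Q : Fin n → ℝ) : Prop := (∀ x, 0 ≤ Q x) ∧ ∑ x, Q x = 1

/-- `P` is a joint probability distribution. -/
def IsJointProbDist {m n : ℕ} (P : Fin m → Fin n → ℝ) : Prop :=
  (∀ x1 x2, 0 ≤ P x1 x2) ∧ ∑ x1, ∑ x2, P x1 x2 = 1

/-- First marginal `P_1`. -/
noncomputable def marg1 {m n : ℕ} (P : Fin m → Fin n → ℝ) (x1 : Fin m) : ℝ := ∑ x2, P x1 x2

/-- Second marginal `P_2`. -/
noncomputable def marg2 {m n : ℕ} (P : Fin m → Fin n → ℝ) (x2 : Fin n) : ℝ := ∑ x1, P x1 x2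

/-- Conditional mutual information `I_P(X₁;Y₂|X₂)`; terms with
`P x1 x2 * W2 x1 x2 y2 = 0` vanish, and summands with `marg2 P x2 = 0` vanish
since then `P x1 x2 = 0`. -/
noncomputable def condMI1 {m n t : ℕ} (P : Fin m → Fin n → ℝ)
    (W2 : Fin m → Fin n → Fin t → ℝ) : ℝ :=
  ∑ x2, ∑ x1, ∑ y2, P x1 x2 * W2 x1 x2 y2 *
    Real.log (W2 x1 x2 y2 / ((∑ x1', P x1' x2 * W2 x1' x2 y2) / marg2 P x2))

/-- Conditional mutual information `I_P(X₂;Y₁|X₁)`. -/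
noncomputable def condMI2 {m n t : ℕ} (P : Fin m → Fin n → ℝ)
    (W1 : Fin m → Fin n → Fin t → ℝ) : ℝ :=
  ∑ x1, ∑ x2, ∑ y1, P x1 x2 * W1 x1 x2 y1 *
    Real.log (W1 x1 x2 y1 / ((∑ x2', P x1 x2' * W1 x1 x2' y1) / marg1 P x1))

/-- Structural assumptions of a generalized push-to-talk two-way channel with
input alphabets `Fin (r1+3)`, `Fin (r2+3)` and output alphabets `Fin (s1+2)`,
`Fin (s2+2)`: both marginal channels are transition matrices; the row of
input `0` of each user is uniform; for each state, the nonzero-input rows are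
permutations of the row of input `1` and have constant column sums
(weak symmetry). -/
def GenPTT {r1 r2 s1 s2 : ℕ} (W1 : Fin (r1 + 3) → Fin (r2 + 3) → Fin (s1 + 2) → ℝ)
    (W2 : Fin (r1 + 3) → Fin (r2 + 3) → Fin (s2 + 2) → ℝ) : Prop :=
  (∀ x1 x2 y1, 0 ≤ W1 x1 x2 y1) ∧ (∀ x1 x2 y2, 0 ≤ W2 x1 x2 y2) ∧
  (∀ x1 x2, ∑ y1, W1 x1 x2 y1 = 1) ∧ (∀ x1 x2, ∑ y2, W2 x1 x2 y2 = 1) ∧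
  (∀ x2 y2, W2 0 x2 y2 = 1 / ((s2 : ℝ) + 2)) ∧
  (∀ x2, ∀ x1 : Fin (r1 + 3), x1 ≠ 0 →
    ∃ σ : Equiv.Perm (Fin (s2 + 2)), ∀ y2, W2 x1 x2 y2 = W2 1 x2 (σ y2)) ∧
  (∀ x2, ∀ y2 y2' : Fin (s2 + 2),
    ∑ x1 ∈ Finset.univ.filter (fun x1 => x1 ≠ (0 : Fin (r1 + 3))), W2 x1 x2 y2 =
    ∑ x1 ∈ Finset.univ.filter (fun x1 => x1 ≠ (0 : Fin (r1 + 3))), W2 x1 x2 y2') ∧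
  (∀ x1 y1, W1 x1 0 y1 = 1 / ((s1 : ℝ) + 2)) ∧
  (∀ x1, ∀ x2 : Fin (r2 + 3), x2 ≠ 0 →
    ∃ σ : Equiv.Perm (Fin (s1 + 2)), ∀ y1, W1 x1 x2 y1 = W1 x1 1 (σ y1)) ∧
  (∀ x1, ∀ y1 y1' : Fin (s1 + 2),
    ∑ x2 ∈ Finset.univ.filter (fun x2 => x2 ≠ (0 : Fin (r2 + 3))), W1 x1 x2 y1 =
    ∑ x2 ∈ Finset.univ.filter (fun x2 => x2 ≠ (0 : Fin (r2 + 3))), W1 x1 x2 y1')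

/-- `C_{1,x₂} = log s₂ − H(row of input 1 of Q_{1,x₂})`. -/
noncomputable def C1 {r1 r2 s2 : ℕ} (W2 : Fin (r1 + 3) → Fin (r2 + 3) → Fin (s2 + 2) → ℝ)
    (x2 : Fin (r2 + 3)) : ℝ := Real.log ((s2 : ℝ) + 2) - ent (fun y2 => W2 1 x2 y2)

/-- `C_{2,x₁} = log s₁ − H(row of input 1 of Q_{2,x₁})`. -/
noncomputable def C2 {r1 r2 s1 : ℕ} (W1 : Fin (r1 + 3) → Fin (r2 + 3) → Fin (s1 + 2) → ℝ)
    (x1 : Fin (r1 + 3)) : ℝ := Real.log ((s1 : ℝ) + 2) - ent (fun y1 => W1 x1 1 y1)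

/-- The channel symmetry property: `C_{1,x₂} = C_{1,1}` for all `x₂ ≠ 0` and
`C_{2,x₁} = C_{2,1}` for all `x₁ ≠ 0`. -/
def SymProp {r1 r2 s1 s2 : ℕ} (W1 : Fin (r1 + 3) → Fin (r2 + 3) → Fin (s1 + 2) → ℝ)
    (W2 : Fin (r1 + 3) → Fin (r2 + 3) → Fin (s2 + 2) → ℝ) : Prop :=
  (∀ x2 : Fin (r2 + 3), x2 ≠ 0 → C1 W2 x2 = C1 W2 1) ∧
  (∀ x1 : Fin (r1 + 3), x1 ≠ 0 → C2 W1 x1 = C2 W1 1)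

/-- The rate pair `R*₄ = (0, C₂₀)` is attained by `1{x₁ = 0} × P^{U0}₂`. -/
theorem stmt14 (r1 r2 s1 s2 : ℕ)
    (W1 : Fin (r1 + 3) → Fin (r2 + 3) → Fin (s1 + 2) → ℝ)
    (W2 : Fin (r1 + 3) → Fin (r2 + 3) → Fin (s2 + 2) → ℝ)
    (hW : GenPTT W1 W2) (hSym : SymProp W1 W2) :
    condMI1 (fun x1 x2 => (if x1 = 0 then (1 : ℝ) else 0) *
        (if x2 = 0 then (0 : ℝ) else ((r2 : ℝ) + 2)⁻¹)) W2 = 0 ∧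
    condMI2 (fun x1 x2 => (if x1 = 0 then (1 : ℝ) else 0) *
        (if x2 = 0 then (0 : ℝ) else ((r2 : ℝ) + 2)⁻¹)) W1 = C2 W1 0 := by
  obtain ⟨hW1nn, hW2nn, hW1sum, hW2sum, hW2unif, hW2perm, hW2col, hW1unif, hW1perm, hW1col⟩ := hW
  have hr2 : (0:ℝ) < (r2:ℝ) + 2 := by positivity
  have hs1 : (0:ℝ) < (s1:ℝ) + 2 := by positivity
  have hs2 : (0:ℝ) < (s2:ℝ) + 2 := by positivity
  set P : Fin (r1+3) → Fin (r2+3) → ℝ := fun x1 x2 =>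
    (if x1 = 0 then (1 : ℝ) else 0) * (if x2 = 0 then (0 : ℝ) else ((r2 : ℝ) + 2)⁻¹) with hP
  have hcard : (Finset.univ.filter (fun x2 => x2 ≠ (0 : Fin (r2+3)))).card = r2 + 2 := by
    rw [Finset.filter_ne', Finset.card_erase_of_mem (Finset.mem_univ _)]
    simp
  constructor
  · unfold condMI1
    apply Finset.sum_eq_zero; intro x2 _
    apply Finset.sum_eq_zero; intro x1 _
    apply Finset.sum_eq_zero; intro y2 _
    by_cases h1 : x1 = 0
    · by_cases h2 : x2 = 0
      · simp [hP, h2]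
      · subst h1
        have hden : (∑ x1', P x1' x2 * W2 x1' x2 y2) / marg2 P x2 = W2 0 x2 y2 := by
          have h1 : ∑ x1', P x1' x2 * W2 x1' x2 y2 = ((r2:ℝ)+2)⁻¹ * W2 0 x2 y2 := by
            simp [hP, ite_mul, h2, Finset.sum_ite_eq']
          have h2' : marg2 P x2 = ((r2:ℝ)+2)⁻¹ := by
            simp [marg2, hP, ite_mul, h2, Finset.sum_ite_eq']
          rw [h1, h2']
          field_simp
        rw [hden, div_self (by rw [hW2unif]; positivity), Real.log_one, mul_zero]
    · simp [hP, h1]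
  · unfold condMI2
    rw [Finset.sum_eq_single 0]
    · -- main term for x1 = 0
      have hm1 : marg1 P 0 = 1 := by
        have : marg1 P 0 = ∑ x2, (if x2 = (0:Fin (r2+3)) then (0:ℝ) else ((r2:ℝ)+2)⁻¹) := by
          simp [marg1, hP]
        rw [this, Finset.sum_ite, Finset.sum_const, Finset.sum_const, hcard]
        rw [smul_zero, zero_add, nsmul_eq_mul]
        push_cast
        field_simp
      have hden : ∀ y1, (∑ x2', P 0 x2' * W1 0 x2' y1) / marg1 P 0 = ((s1:ℝ)+2)⁻¹ := by
        intro y1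
        have hnum : ∑ x2', P 0 x2' * W1 0 x2' y1 =
            ((r2:ℝ)+2)⁻¹ * ∑ x2' ∈ Finset.univ.filter (fun x2 => x2 ≠ (0 : Fin (r2+3))),
              W1 0 x2' y1 := by
          rw [Finset.mul_sum, Finset.sum_filter]
          apply Finset.sum_congr rfl
          intro x2' _
          by_cases h : x2' = 0 <;> simp [hP, h, mul_comm]
        have hS : ∀ y1' : Fin (s1+2),
            (∑ x2' ∈ Finset.univ.filter (fun x2 => x2 ≠ (0 : Fin (r2+3))), W1 0 x2' y1')
              = ((r2:ℝ)+2) / ((s1:ℝ)+2) := by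
          intro y1'
          have htot : ∑ y, ∑ x2' ∈ Finset.univ.filter (fun x2 => x2 ≠ (0 : Fin (r2+3))),
              W1 0 x2' y = (r2:ℝ) + 2 := by
            rw [Finset.sum_comm]
            have : ∀ x2' ∈ Finset.univ.filter (fun x2 => x2 ≠ (0 : Fin (r2+3))),
                ∑ y, W1 0 x2' y = 1 := fun x2' _ => hW1sum 0 x2'
            rw [Finset.sum_congr rfl this, Finset.sum_const, hcard]
            push_cast; ring
          have hconst : ∑ y : Fin (s1+2), ∑ x2' ∈ Finset.univ.filter
              (fun x2 => x2 ≠ (0 : Fin (r2+3))), W1 0 x2' y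
              = ((s1:ℝ)+2) * ∑ x2' ∈ Finset.univ.filter (fun x2 => x2 ≠ (0 : Fin (r2+3))),
                W1 0 x2' y1' := by
            rw [Finset.sum_congr rfl (fun y _ => hW1col 0 y y1'), Finset.sum_const,
              Finset.card_univ, Fintype.card_fin, nsmul_eq_mul]
            push_cast; ring
          rw [eq_div_iff (ne_of_gt hs1), ← htot, hconst, mul_comm]
        rw [hnum, hS y1, hm1, div_one]
        field_simp
      have hterm : ∀ x2 : Fin (r2+3), x2 ≠ 0 →
          ∑ y1, W1 0 x2 y1 * Real.log (W1 0 x2 y1 * ((s1:ℝ)+2)) = C2 W1 0 := by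
        intro x2 hx2
        have hpt : ∀ y1, W1 0 x2 y1 * Real.log (W1 0 x2 y1 * ((s1:ℝ)+2)) =
            W1 0 x2 y1 * Real.log (W1 0 x2 y1) + W1 0 x2 y1 * Real.log ((s1:ℝ)+2) := by
          intro y1
          by_cases h : W1 0 x2 y1 = 0
          · simp [h]
          · rw [Real.log_mul h (ne_of_gt hs1)]; ring
        rw [Finset.sum_congr rfl (fun y1 _ => hpt y1), Finset.sum_add_distrib,
          ← Finset.sum_mul, hW1sum 0 x2, one_mul]
        obtain ⟨σ, hσ⟩ := hW1perm 0 x2 hx2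
        have hent : ∑ y1, W1 0 x2 y1 * Real.log (W1 0 x2 y1)
            = ∑ y1, W1 0 1 y1 * Real.log (W1 0 1 y1) := by
          rw [Finset.sum_congr rfl (fun y1 _ => by rw [hσ y1])]
          exact Equiv.sum_comp σ (fun y => W1 0 1 y * Real.log (W1 0 1 y))
        rw [hent, C2, ent]
        ring
      have : ∀ x2 : Fin (r2+3), ∑ y1, P 0 x2 * W1 0 x2 y1 *
          Real.log (W1 0 x2 y1 / ((∑ x2', P 0 x2' * W1 0 x2' y1) / marg1 P 0))
          = (if x2 = 0 then (0:ℝ) else ((r2:ℝ)+2)⁻¹) * C2 W1 0 := by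
        intro x2
        by_cases h : x2 = 0
        · simp [hP, h]
        · have hPx : P 0 x2 = ((r2:ℝ)+2)⁻¹ := by simp [hP, h]
          rw [if_neg h, ← hterm x2 h, Finset.mul_sum]
          apply Finset.sum_congr rfl
          intro y1 _
          rw [hden y1, hPx, div_eq_mul_inv, inv_inv]
          ring
      rw [Finset.sum_congr rfl (fun x2 _ => this x2), ← Finset.sum_mul]
      have : ∑ x2 : Fin (r2+3), (if x2 = 0 then (0:ℝ) else ((r2:ℝ)+2)⁻¹) = 1 := by
        rw [Finset.sum_ite, Finset.sum_const, Finset.sum_const, hcard]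
        rw [smul_zero, zero_add, nsmul_eq_mul]
        push_cast; field_simp
      rw [this, one_mul]
    · intro x1 _ hx1
      apply Finset.sum_eq_zero; intro x2 _
      apply Finset.sum_eq_zero; intro y1 _
      simp [hP, hx1]
    · simp
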